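/- Let ν be a σ-finite Borel measure on B = {z ∈ ℝ^m : 0 < |z| ≤ 1} with ∫_B |z|² ν(dz) < ∞, T>0, N>0, and let g: [0,T]×B → [0,∞) be measurable with ∫₀^T ∫_B ℓ(g(s,z)) ν(dz) ds ≤ N, where ℓ(x)=x log x − x + 1. Then ∫₀^T ∫_B |z| |g(s,z) − 1| ν(dz) ds < ∞, and in fact sup over all such g of this integral is finite. -/
import Mathlib


open MeasureTheory Set


lemma ell_key (b : ℝ) (hb : 0 ≤ b) :
    (Real.sqrt b - 1)^2 ≤ b * Real.log b - b + 1 := by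
  rcases eq_or_lt_of_le hb with h0 | hb'
  · simp [← h0]
  · have hs : 0 < Real.sqrt b := Real.sqrt_pos.mpr hb'
    have hsq : Real.sqrt b ^ 2 = b := Real.sq_sqrt hb
    have hlog : 1 - 1/Real.sqrt b ≤ Real.log (Real.sqrt b) := by
      have h := Real.log_le_sub_one_of_pos (x := 1/Real.sqrt b) (by positivity)
      rw [Real.log_div one_ne_zero (ne_of_gt hs), Real.log_one] at h
      linarith
    have hlb : Real.log b = 2 * Real.log (Real.sqrt b) := by
      rw [Real.log_sqrt hb]; ring
    have h2 : b * (1 - 1/Real.sqrt b) ≤ b * Real.log (Real.sqrt b) :=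
      mul_le_mul_of_nonneg_left hlog hb
    have h3 : b * (1 - 1/Real.sqrt b) = b - Real.sqrt b := by
      field_simp
      nlinarith [hsq]
    nlinarith [hsq]

lemma master (σ b : ℝ) (hσ0 : 0 ≤ σ) (hσ1 : σ ≤ 1) (hb : 0 ≤ b) :
    σ * |b - 1| ≤ σ^2/2 + 9/2 * (b * Real.log b - b + 1) := by
  have hk := ell_key b hb
  have hsq : Real.sqrt b ^ 2 = b := Real.sq_sqrt hb
  have hsnn : 0 ≤ Real.sqrt b := Real.sqrt_nonneg b
  rcases le_or_gt b 4 with h4 | h4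
  · have hs2 : Real.sqrt b ≤ 2 := by nlinarith
    have h5 : σ * |b-1| ≤ σ^2/2 + (b-1)^2/2 := by
      nlinarith [sq_nonneg (σ - |b-1|), sq_abs (b-1), abs_nonneg (b-1)]
    have h6 : (b-1)^2 ≤ 9 * (Real.sqrt b - 1)^2 := by
      nlinarith [mul_nonneg (sq_nonneg (Real.sqrt b - 1))
        (by nlinarith : (0:ℝ) ≤ 9 - (Real.sqrt b + 1)^2)]
    linarith
  · have hs2 : 2 < Real.sqrt b := by nlinarith
    have habs : |b - 1| = b - 1 := abs_of_nonneg (by linarith)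
    have h8 : σ * |b-1| ≤ b - 1 := by rw [habs]; nlinarith
    have h7 : b - 1 ≤ 9/2 * (Real.sqrt b - 1)^2 := by nlinarith
    nlinarith [sq_nonneg σ]

/-- For a σ-finite Lévy measure `ν` on `B = {0 < |z| ≤ 1} ⊆ ℝ^m` with `∫|z|² dν < ∞`, the
integral `∫₀^T ∫_B |z||g−1| dν ds` is finite, uniformly over all controls `g ≥ 0` of
relative-entropy cost `∫₀^T ∫_B ℓ(g) dν ds ≤ N`, where `ℓ(x) = x log x − x + 1`. -/
theorem cost_bounded_controls_uniform_integrability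
    (m : ℕ) (hm : 1 ≤ m) (ν : Measure (EuclideanSpace ℝ (Fin m))) [SigmaFinite ν]
    (hsupp : ν {z | ¬(0 < ‖z‖ ∧ ‖z‖ ≤ 1)} = 0)
    (hmom : ∫⁻ z, ENNReal.ofReal (‖z‖ ^ 2) ∂ν < ⊤)
    (T N : ℝ) (hT : 0 < T) (hN : 0 < N) :
    ∃ M : ℝ, ∀ g : ℝ → EuclideanSpace ℝ (Fin m) → ℝ,
      Measurable (fun p : ℝ × EuclideanSpace ℝ (Fin m) => g p.1 p.2) →
      (∀ s z, 0 ≤ g s z) →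
      (∫⁻ s in Ioc (0 : ℝ) T, ∫⁻ z,
          ENNReal.ofReal (g s z * Real.log (g s z) - g s z + 1) ∂ν
        ≤ ENNReal.ofReal N) →
      ∫⁻ s in Ioc (0 : ℝ) T, ∫⁻ z,
          ENNReal.ofReal (‖z‖ * |g s z - 1|) ∂ν
        ≤ ENNReal.ofReal M := by
  set C : ENNReal := ∫⁻ z, ENNReal.ofReal (‖z‖^2/2) ∂ν with hC
  have hCle : C ≤ ∫⁻ z, ENNReal.ofReal (‖z‖ ^ 2) ∂ν := by
    refine lintegral_mono fun z => ENNReal.ofReal_le_ofReal ?_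
    nlinarith [sq_nonneg ‖z‖]
  have hCne : C * ENNReal.ofReal T + ENNReal.ofReal (9/2) * ENNReal.ofReal N ≠ ⊤ := by
    refine ENNReal.add_ne_top.mpr ⟨ENNReal.mul_ne_top ?_ ENNReal.ofReal_ne_top,
      ENNReal.mul_ne_top ENNReal.ofReal_ne_top ENNReal.ofReal_ne_top⟩
    exact (lt_of_le_of_lt hCle hmom).ne
  refine ⟨(C * ENNReal.ofReal T + ENNReal.ofReal (9/2) * ENNReal.ofReal N).toReal, ?_⟩
  intro g hgmeas hg0 hcost
  have hae : ∀ᵐ z ∂ν, ‖z‖ ≤ 1 := by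
    rw [ae_iff]
    refine measure_mono_null (fun z hz => ?_) hsupp
    simp only [mem_setOf_eq] at hz ⊢
    exact fun h => hz h.2
  have hinner : ∀ s, ∫⁻ z, ENNReal.ofReal (‖z‖ * |g s z - 1|) ∂ν ≤
      C + ENNReal.ofReal (9/2) *
        ∫⁻ z, ENNReal.ofReal (g s z * Real.log (g s z) - g s z + 1) ∂ν := by
    intro s
    have hpt : ∀ᵐ z ∂ν, ENNReal.ofReal (‖z‖ * |g s z - 1|) ≤
        ENNReal.ofReal (‖z‖^2/2) + ENNReal.ofReal (9/2) *
          ENNReal.ofReal (g s z * Real.log (g s z) - g s z + 1) := by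
      filter_upwards [hae] with z hz
      have hℓ : 0 ≤ g s z * Real.log (g s z) - g s z + 1 :=
        le_trans (sq_nonneg _) (ell_key _ (hg0 s z))
      calc ENNReal.ofReal (‖z‖ * |g s z - 1|)
          ≤ ENNReal.ofReal (‖z‖^2/2 + 9/2 * (g s z * Real.log (g s z) - g s z + 1)) :=
            ENNReal.ofReal_le_ofReal (master ‖z‖ (g s z) (norm_nonneg z) hz (hg0 s z))
        _ = ENNReal.ofReal (‖z‖^2/2) + ENNReal.ofReal (9/2 * (g s z * Real.log (g s z) - g s z + 1)) :=
            ENNReal.ofReal_add (by positivity) (by positivity)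
        _ = _ := by rw [ENNReal.ofReal_mul (by norm_num : (0:ℝ) ≤ 9/2)]
    calc ∫⁻ z, ENNReal.ofReal (‖z‖ * |g s z - 1|) ∂ν
        ≤ ∫⁻ z, (ENNReal.ofReal (‖z‖^2/2) + ENNReal.ofReal (9/2) *
            ENNReal.ofReal (g s z * Real.log (g s z) - g s z + 1)) ∂ν :=
          lintegral_mono_ae hpt
      _ = C + ENNReal.ofReal (9/2) *
            ∫⁻ z, ENNReal.ofReal (g s z * Real.log (g s z) - g s z + 1) ∂ν := by
          rw [lintegral_add_left (by fun_prop),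
            lintegral_const_mul' _ _ ENNReal.ofReal_ne_top]
  calc ∫⁻ s in Ioc (0:ℝ) T, ∫⁻ z, ENNReal.ofReal (‖z‖ * |g s z - 1|) ∂ν
      ≤ ∫⁻ s in Ioc (0:ℝ) T, (C + ENNReal.ofReal (9/2) *
          ∫⁻ z, ENNReal.ofReal (g s z * Real.log (g s z) - g s z + 1) ∂ν) :=
        lintegral_mono fun s => hinner s
    _ = C * volume (Ioc (0:ℝ) T) + ENNReal.ofReal (9/2) *
          ∫⁻ s in Ioc (0:ℝ) T, ∫⁻ z,
            ENNReal.ofReal (g s z * Real.log (g s z) - g s z + 1) ∂ν := by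
        rw [lintegral_add_left measurable_const,
          lintegral_const_mul' _ _ ENNReal.ofReal_ne_top, setLIntegral_const]
    _ ≤ C * ENNReal.ofReal T + ENNReal.ofReal (9/2) * ENNReal.ofReal N := by
        have hv : volume (Ioc (0:ℝ) T) = ENNReal.ofReal T := by
          rw [Real.volume_Ioc, sub_zero]
        rw [hv]
        exact add_le_add le_rfl (mul_le_mul_right hcost _)
    _ = ENNReal.ofReal ((C * ENNReal.ofReal T + ENNReal.ofReal (9/2) * ENNReal.ofReal N).toReal) := by
        rw [ENNReal.ofReal_toReal hCne]
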